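/- Let E be a row-finite graph. E satisfies Condition (L) (every cycle has an exit) if and only if the group ℤ acts freely on the nonzero elements of the talented monoid M_E^{gr}, i.e., ^n a = a for nonzero a implies n = 0. -/

import Mathlib

set_option linter.unusedSectionVars false

/-- The algebraic preorder on a commutative monoid: `a ≤ b` iff `b = a + c` for some `c`. -/
def algLE {M : Type*} [AddCommMonoid M] (a b : M) : Prop := ∃ c, b = a + c

/-- A row-finite directed graph: vertices `V`, edges `Ed`, source `s`, range `r`,
and for each vertex the (finite) set of edges it emits. -/
structure RFGraph (V : Type) (Ed : Type) where
  s : Ed → V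
  r : Ed → V
  emit : V → Finset Ed
  mem_emit : ∀ e v, e ∈ emit v ↔ s e = v

namespace RFGraph

variable {V Ed : Type} [DecidableEq V] (G : RFGraph V Ed)

/-- The one-step rewriting relation `→₁` on the free commutative monoid `Multiset V`:
replace one occurrence of a non-sink vertex `v` by the sum of ranges of edges emitted by `v`. -/
def Step1 (a b : Multiset V) : Prop :=
  ∃ v : V, v ∈ a ∧ G.emit v ≠ ∅ ∧ b = a.erase v + (G.emit v).val.map G.r

/-- The reflexive-transitive closure `→` of `→₁`. -/
def Step : Multiset V → Multiset V → Prop := Relation.ReflTransGen G.Step1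

/-- The congruence on the free commutative monoid generated by `→₁`. -/
def gcon : AddCon (Multiset V) := addConGen G.Step1

/-- The graph monoid `M_E`. -/
def GM := G.gcon.Quotient

instance : AddCommMonoid G.GM := inferInstanceAs (AddCommMonoid G.gcon.Quotient)

/-- One-step rewriting for the talented monoid: replace `v(i)` by `Σ_{e ∈ s⁻¹(v)} r(e)(i+1)`. -/
def TStep1 (a b : Multiset (V × ℤ)) : Prop :=
  ∃ (v : V) (i : ℤ), (v, i) ∈ a ∧ G.emit v ≠ ∅ ∧
    b = a.erase (v, i) + (G.emit v).val.map (fun e => (G.r e, i + 1))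

/-- The congruence generated by the talented one-step relation. -/
def tcon : AddCon (Multiset (V × ℤ)) := addConGen G.TStep1

/-- The talented monoid `M_E^{gr}`. -/
def TM := G.tcon.Quotient

instance : AddCommMonoid G.TM := inferInstanceAs (AddCommMonoid G.tcon.Quotient)

/-- The generator `v(i)` of the talented monoid. -/
def tgen (v : V) (i : ℤ) : G.TM := G.tcon.mk' {(v, i)}

/-- The shift `v(i) ↦ v(i+n)` on the free commutative monoid `Multiset (V × ℤ)`. -/
def shiftMul (n : ℤ) : Multiset (V × ℤ) →+ Multiset (V × ℤ) where
  toFun a := a.map fun p => (p.1, p.2 + n)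
  map_zero' := rfl
  map_add' a b := Multiset.map_add (fun p => (p.1, p.2 + n)) a b

lemma shift_inj (n : ℤ) : Function.Injective (fun p : V × ℤ => (p.1, p.2 + n)) := by
  rintro ⟨a, b⟩ ⟨c, d⟩ h
  simp only [Prod.mk.injEq] at h
  exact Prod.ext h.1 (by omega)

lemma tstep1_shift (n : ℤ) {a b : Multiset (V × ℤ)} (h : G.TStep1 a b) :
    G.TStep1 (shiftMul n a) (shiftMul n b) := by
  obtain ⟨v, i, hv, hne, rfl⟩ := h
  refine ⟨v, i + n, Multiset.mem_map.2 ⟨(v, i), hv, rfl⟩, hne, ?_⟩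
  show Multiset.map _ _ = _
  rw [Multiset.map_add]
  congr 1
  · exact (Multiset.map_erase _ (shift_inj n) (v, i) a)
  · rw [Multiset.map_map]
    congr 1
    funext e
    simp only [Function.comp_apply]
    congr 1
    omega

lemma tcon_shift (n : ℤ) {a b : Multiset (V × ℤ)} (h : G.tcon a b) :
    G.tcon (shiftMul n a) (shiftMul n b) := by
  have hle : addConGen G.TStep1 ≤
      { r := fun a b => G.tcon (shiftMul n a) (shiftMul n b)
        iseqv := ⟨fun _ => G.tcon.refl _, fun h => G.tcon.symm h,
          fun h₁ h₂ => G.tcon.trans h₁ h₂⟩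
        add' := fun h₁ h₂ => by
          simpa only [map_add] using G.tcon.add h₁ h₂ } := by
    refine (AddCon.addConGen_le).2 fun x y hxy => ?_
    exact AddConGen.Rel.of _ _ (G.tstep1_shift n hxy)
  exact hle h

/-- The `ℤ`-action on the talented monoid, `ⁿ(v(i)) = v(i+n)`. -/
def tshift (n : ℤ) : G.TM →+ G.TM :=
  G.tcon.lift (G.tcon.mk'.comp (shiftMul n)) (by
    intro a b h
    show G.tcon.mk' (shiftMul n a) = G.tcon.mk' (shiftMul n b)
    exact (AddCon.eq _).2 (G.tcon_shift n h))

/-- Reachability: there is a (possibly trivial) path from `u` to `v`. -/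
def Reaches (u v : V) : Prop :=
  Relation.ReflTransGen (fun a b => ∃ e : Ed, G.s e = a ∧ G.r e = b) u v

/-- A cycle: a nonempty path of edges, closed up, with distinct source vertices. -/
def IsCycle (p : List Ed) : Prop :=
  ∃ h : p ≠ [], List.Chain' (fun e f => G.r e = G.s f) p ∧
    G.r (p.getLast h) = G.s (p.head h) ∧ (p.map G.s).Nodup

/-- The cycle `p` has an exit: some vertex on it emits an edge not on the cycle. -/
def HasExit (p : List Ed) : Prop :=
  ∃ e : Ed, (∃ f ∈ p, G.s e = G.s f) ∧ e ∉ p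

/-- The cycle `p` has no exit: every vertex on it emits exactly its cycle edge. -/
def NoExit (p : List Ed) : Prop :=
  ∀ e ∈ p, G.emit (G.s e) = {e}

/-- `ℤ`-order-ideals of the talented monoid. -/
def IsOrderIdeal (I : Set G.TM) : Prop :=
  (0 : G.TM) ∈ I ∧ (∀ a b : G.TM, a ∈ I → b ∈ I → a + b ∈ I) ∧
    (∀ (n : ℤ) (a : G.TM), a ∈ I → G.tshift n a ∈ I) ∧
    (∀ a b : G.TM, algLE a b → b ∈ I → a ∈ I)

/-- The smallest `ℤ`-order-ideal of `M_E^{gr}` containing `v(0)`. -/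
def genIdeal (v : V) : Set G.TM :=
  ⋂₀ {I : Set G.TM | G.IsOrderIdeal I ∧ G.tgen v 0 ∈ I}

/-- Minimality in the talented monoid: `0 ≠ b ≤ a` implies `a ≤ b`. -/
def TMin (a : G.TM) : Prop := ∀ b : G.TM, b ≠ 0 → algLE b a → algLE a b

/-- The covering graph `\bar E`. -/
def cover : RFGraph (V × ℤ) (Ed × ℤ) where
  s p := (G.s p.1, p.2)
  r p := (G.r p.1, p.2 + 1)
  emit p := (G.emit p.1).map ⟨fun e => (e, p.2), fun a b h => by
    simpa using congrArg Prod.fst h⟩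
  mem_emit := by
    rintro ⟨e, n⟩ ⟨v, m⟩
    simp only [Finset.mem_map, Function.Embedding.coeFn_mk, Prod.mk.injEq, G.mem_emit]
    constructor
    · rintro ⟨a, ha, rfl, rfl⟩; exact ⟨ha, rfl⟩
    · rintro ⟨rfl, rfl⟩; first | exact ⟨e, rfl, rfl, rfl⟩ | exact ⟨e, rfl, rfl⟩

/-- The set of vertices on a cycle. -/
def cycVerts (p : List Ed) : Set V := {v | ∃ e ∈ p, G.s e = v}

end RFGraph
namespace RFGraph

variable {V Ed : Type} [DecidableEq V] (G : RFGraph V Ed)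

/-- The expansion multiset of a vertex at level `i`. -/
def texp (v : V) (i : ℤ) : Multiset (V × ℤ) :=
  (G.emit v).val.map (fun e => (G.r e, i + 1))

lemma texp_ne_zero {v : V} (i : ℤ) (h : G.emit v ≠ ∅) : G.texp v i ≠ 0 := by
  simp only [texp, ne_eq, Multiset.map_eq_zero, Finset.val_eq_zero]
  exact h

lemma tstep1_def {a b : Multiset (V × ℤ)} :
    G.TStep1 a b ↔ ∃ v i, (v, i) ∈ a ∧ G.emit v ≠ ∅ ∧ b = a.erase (v, i) + G.texp v i :=
  Iff.rfl

/-- The reflexive transitive closure of `TStep1`. -/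
def TStep : Multiset (V × ℤ) → Multiset (V × ℤ) → Prop := Relation.ReflTransGen G.TStep1

lemma tstep1_add_right {a b : Multiset (V × ℤ)} (c : Multiset (V × ℤ)) (h : G.TStep1 a b) :
    G.TStep1 (a + c) (b + c) := by
  obtain ⟨v, i, hm, hne, rfl⟩ := h
  exact ⟨v, i, Multiset.mem_add.2 (Or.inl hm), hne, by
    rw [Multiset.erase_add_left_pos _ hm, add_right_comm]⟩

lemma tstep_add_right {a b : Multiset (V × ℤ)} (c : Multiset (V × ℤ)) (h : G.TStep a b) :
    G.TStep (a + c) (b + c) :=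
  Relation.ReflTransGen.lift (· + c) (fun _ _ h => G.tstep1_add_right c h) _ _ h

lemma tstep_add {a b c d : Multiset (V × ℤ)} (h1 : G.TStep a b) (h2 : G.TStep c d) :
    G.TStep (a + c) (b + d) := by
  refine Relation.ReflTransGen.trans (G.tstep_add_right c h1) ?_
  rw [add_comm b c, add_comm b d]
  exact G.tstep_add_right b h2

lemma tstep_shift (n : ℤ) {a b : Multiset (V × ℤ)} (h : G.TStep a b) :
    G.TStep (shiftMul n a) (shiftMul n b) :=
  Relation.ReflTransGen.lift (shiftMul n) (fun _ _ h => G.tstep1_shift n h) _ _ h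

lemma tstep1_ne_zero {a b : Multiset (V × ℤ)} (h : G.TStep1 a b) : b ≠ 0 := by
  obtain ⟨v, i, hm, hne, rfl⟩ := h
  intro hz
  obtain ⟨x, hx⟩ := Multiset.exists_mem_of_ne_zero (G.texp_ne_zero i hne)
  have : x ∈ (0 : Multiset (V × ℤ)) := hz ▸ Multiset.mem_add.2 (Or.inr hx)
  simp at this

lemma tstep_ne_zero {a b : Multiset (V × ℤ)} (h : G.TStep a b) (ha : a ≠ 0) : b ≠ 0 := by
  induction h with
  | refl => exact ha
  | tail _ hstep _ => exact G.tstep1_ne_zero hstep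

lemma tstep1_diamond {a b c : Multiset (V × ℤ)} (h1 : G.TStep1 a b) (h2 : G.TStep1 a c) :
    ∃ d, Relation.ReflGen G.TStep1 b d ∧ Relation.ReflTransGen G.TStep1 c d := by
  obtain ⟨v, i, hv, hvne, rfl⟩ := h1
  obtain ⟨w, j, hw, hwne, rfl⟩ := h2
  by_cases hxy : (w, j) = (v, i)
  · have hww : w = v := congrArg Prod.fst hxy
    have hjj : j = i := congrArg Prod.snd hxy
    subst hww; subst hjj
    exact ⟨_, Relation.ReflGen.refl, Relation.ReflTransGen.refl⟩
  · have hw' : (w, j) ∈ a.erase (v, i) := (Multiset.mem_erase_of_ne hxy).2 hw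
    have hv' : (v, i) ∈ a.erase (w, j) :=
      (Multiset.mem_erase_of_ne (fun h => hxy h.symm)).2 hv
    refine ⟨((a.erase (v, i)).erase (w, j) + Multiset.map (fun e => (G.r e, i + 1)) (G.emit v).val)
        + Multiset.map (fun e => (G.r e, j + 1)) (G.emit w).val,
      Relation.ReflGen.single ⟨w, j, Multiset.mem_add.2 (Or.inl hw'), hwne, ?_⟩,
      Relation.ReflTransGen.single ⟨v, i, Multiset.mem_add.2 (Or.inl hv'), hvne, ?_⟩⟩
    · rw [Multiset.erase_add_left_pos _ hw']
    · rw [Multiset.erase_add_left_pos _ hv', Multiset.erase_comm, add_right_comm]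

/-- The join congruence. -/
def joinCon : AddCon (Multiset (V × ℤ)) where
  r := Relation.Join G.TStep
  iseqv := Relation.equivalence_join_reflTransGen (fun _ _ _ h1 h2 => G.tstep1_diamond h1 h2)
  add' := fun ⟨e, h1, h2⟩ ⟨f, h3, h4⟩ => ⟨e + f, G.tstep_add h1 h3, G.tstep_add h2 h4⟩

lemma tcon_join {a b : Multiset (V × ℤ)} (h : G.tcon a b) :
    ∃ c, G.TStep a c ∧ G.TStep b c := by
  have hle : addConGen G.TStep1 ≤ G.joinCon := by
    refine (AddCon.addConGen_le).2 fun x y hxy => ?_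
    exact ⟨y, Relation.ReflTransGen.single hxy, Relation.ReflTransGen.refl⟩
  exact hle h

lemma tstep_tcon {a b : Multiset (V × ℤ)} (h : G.TStep a b) : G.tcon a b := by
  induction h with
  | refl => exact G.tcon.refl a
  | tail _ hstep ih => exact G.tcon.trans ih (AddConGen.Rel.of _ _ hstep)

lemma tstep_from_zero {c : Multiset (V × ℤ)} (h : G.TStep 0 c) : c = 0 := by
  rcases Relation.ReflTransGen.cases_head h with h | ⟨y, hstep, -⟩
  · exact h.symm
  · obtain ⟨v, i, hv, -, -⟩ := hstep
    simp at hv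

lemma mk'_eq_zero {a : Multiset (V × ℤ)} (h : G.tcon.mk' a = 0) : a = 0 := by
  have h0 : G.tcon a 0 := by
    have : G.tcon.mk' a = G.tcon.mk' 0 := by rw [h, map_zero]
    exact (AddCon.eq _).1 this
  obtain ⟨c, h1, h2⟩ := G.tcon_join h0
  by_contra ha
  exact (G.tstep_ne_zero h1 ha) (G.tstep_from_zero h2)

lemma tshift_mk' (n : ℤ) (a : Multiset (V × ℤ)) :
    G.tshift n (G.tcon.mk' a) = G.tcon.mk' (shiftMul n a) :=
  AddCon.lift_mk' _ _

lemma shiftMul_shiftMul (m n : ℤ) (a : Multiset (V × ℤ)) :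
    shiftMul m (shiftMul n a) = shiftMul (n + m) a := by
  show Multiset.map _ (Multiset.map _ a) = Multiset.map _ a
  rw [Multiset.map_map]
  refine Multiset.map_congr rfl fun x _ => ?_
  simp [Function.comp, add_assoc]

lemma shiftMul_zero' (a : Multiset (V × ℤ)) : shiftMul 0 a = a := by
  show Multiset.map _ a = a
  have : (fun p : V × ℤ => (p.1, p.2 + (0 : ℤ))) = id := by
    funext p; simp
  rw [this, Multiset.map_id]

lemma tshift_tshift (m n : ℤ) (a : G.TM) :
    G.tshift m (G.tshift n a) = G.tshift (n + m) a := by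
  obtain ⟨α, rfl⟩ := AddCon.mk'_surjective a
  rw [tshift_mk', tshift_mk', tshift_mk', shiftMul_shiftMul]

lemma tshift_zero' (a : G.TM) : G.tshift 0 a = a := by
  obtain ⟨α, rfl⟩ := AddCon.mk'_surjective a
  rw [tshift_mk', shiftMul_zero']

end RFGraph
namespace RFGraph

variable {V Ed : Type} [DecidableEq V] (G : RFGraph V Ed)

open Classical in
/-- Full expansion of a generator up to level `L` (stopping at sinks). -/
noncomputable def phi (L : ℤ) (x : V × ℤ) : Multiset (V × ℤ) :=
  if h : L ≤ x.2 ∨ G.emit x.1 = ∅ then {x}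
  else (G.emit x.1).val.bind (fun e => phi L (G.r e, x.2 + 1))
termination_by (L - x.2).toNat
decreasing_by
  rw [not_or, not_le] at h
  have h1 : x.2 < L := h.1
  omega

lemma phi_stop {L : ℤ} {x : V × ℤ} (h : L ≤ x.2 ∨ G.emit x.1 = ∅) : G.phi L x = {x} := by
  rw [phi.eq_def]
  exact dif_pos h

lemma phi_expand {L : ℤ} {x : V × ℤ} (h1 : x.2 < L) (h2 : G.emit x.1 ≠ ∅) :
    G.phi L x = (G.emit x.1).val.bind (fun e => G.phi L (G.r e, x.2 + 1)) := by
  rw [phi.eq_def]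
  exact dif_neg (by rw [not_or]; exact ⟨not_le.2 h1, h2⟩)

lemma phi_ne_zero (L : ℤ) (x : V × ℤ) : G.phi L x ≠ 0 := by
  by_cases h : L ≤ x.2 ∨ G.emit x.1 = ∅
  · rw [G.phi_stop h]; simp
  · push_neg at h
    rw [G.phi_expand (by omega) (Finset.nonempty_iff_ne_empty.1 h.2)]
    intro hz
    obtain ⟨e, he⟩ := h.2
    have := phi_ne_zero L (G.r e, x.2 + 1)
    have hmem : ∀ y ∈ G.phi L (G.r e, x.2 + 1), y ∈ (0 : Multiset (V × ℤ)) := by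
      intro y hy
      rw [← hz]
      exact Multiset.mem_bind.2 ⟨e, Finset.mem_def.1 he, hy⟩
    obtain ⟨y, hy⟩ := Multiset.exists_mem_of_ne_zero this
    simpa using hmem y hy
termination_by (L - x.2).toNat
decreasing_by
  rw [not_or, not_le] at h
  have h1 : x.2 < L := h.1
  omega

lemma phi_ub {L : ℤ} {x : V × ℤ} (hx : x.2 ≤ L) : ∀ y ∈ G.phi L x, y.2 ≤ L := by
  by_cases h : L ≤ x.2 ∨ G.emit x.1 = ∅
  · rw [G.phi_stop h]
    intro y hy
    rw [Multiset.mem_singleton.1 hy]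
    exact hx
  · push_neg at h
    rw [G.phi_expand (by omega) (Finset.nonempty_iff_ne_empty.1 h.2)]
    intro y hy
    obtain ⟨e, -, hy'⟩ := Multiset.mem_bind.1 hy
    exact phi_ub (by omega) y hy'
termination_by (L - x.2).toNat
decreasing_by
  rw [not_or, not_le] at h
  have h1 : x.2 < L := h.1
  omega

lemma bind_eq_singleton {α β : Type*} {s : Multiset α} {f : α → Multiset β} {y : β}
    (h : s.bind f = {y}) (hf : ∀ a ∈ s, f a ≠ 0) : ∃ a, s = {a} ∧ f a = {y} := by
  induction s using Multiset.induction_on with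
  | empty => simp at h
  | cons a t _ =>
    rw [Multiset.cons_bind] at h
    have hcard := congrArg Multiset.card h
    rw [Multiset.card_add, Multiset.card_singleton] at hcard
    have hfa : 1 ≤ Multiset.card (f a) := Multiset.card_pos.2 (hf a (Multiset.mem_cons_self a t))
    have hrest0 : t.bind f = 0 :=
      Multiset.card_eq_zero.1 (by omega)
    have ht : t = 0 := by
      by_contra hne
      obtain ⟨b, hb⟩ := Multiset.exists_mem_of_ne_zero hne
      obtain ⟨z, hz⟩ := Multiset.exists_mem_of_ne_zero
        (hf b (Multiset.mem_cons_of_mem hb))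
      have : z ∈ t.bind f := Multiset.mem_bind.2 ⟨b, hb, hz⟩
      rw [hrest0] at this
      simp at this
    rw [ht, Multiset.zero_bind, add_zero] at h
    exact ⟨a, by rw [ht]; rfl, h⟩

lemma phi_sing_sink {L : ℤ} {x y : V × ℤ} (h : G.phi L x = {y}) (hy : y.2 < L) :
    G.emit y.1 = ∅ := by
  by_cases hc : L ≤ x.2 ∨ G.emit x.1 = ∅
  · rw [G.phi_stop hc] at h
    have := Multiset.singleton_inj.1 h
    rcases hc with hc | hc
    · rw [← this] at hy; omega
    · rw [← this]; exact hc
  · push_neg at hc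
    rw [G.phi_expand (by omega) (Finset.nonempty_iff_ne_empty.1 hc.2)] at h
    obtain ⟨e, -, hfe⟩ := bind_eq_singleton h (fun a _ => G.phi_ne_zero L _)
    exact phi_sing_sink hfe hy
termination_by (L - x.2).toNat
decreasing_by
  rw [not_or, not_le] at hc
  have h1 := hc.1
  omega

/-- Deterministic paths: every vertex along the way emits exactly one edge. -/
inductive DetPath : V → List Ed → V → Prop
  | nil (v : V) : DetPath v [] v
  | cons {v w : V} {e : Ed} {es : List Ed} :
      G.emit v = {e} → DetPath (G.r e) es w → DetPath v (e :: es) w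

lemma phi_det {L : ℤ} {x y : V × ℤ} (h : G.phi L x = {y}) :
    ∃ es : List Ed, G.DetPath x.1 es y.1 ∧ x.2 + es.length = y.2 := by
  by_cases hc : L ≤ x.2 ∨ G.emit x.1 = ∅
  · rw [G.phi_stop hc] at h
    have := Multiset.singleton_inj.1 h
    exact ⟨[], by rw [← this]; exact DetPath.nil _, by rw [← this]; simp⟩
  · push_neg at hc
    rw [G.phi_expand (by omega) (Finset.nonempty_iff_ne_empty.1 hc.2)] at h
    obtain ⟨e, hval, hfe⟩ := bind_eq_singleton h (fun a _ => G.phi_ne_zero L _)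
    obtain ⟨es, hdp, hlen⟩ := phi_det hfe
    have hemit : G.emit x.1 = {e} := Finset.val_inj.1 (by rw [hval]; rfl)
    exact ⟨e :: es, DetPath.cons hemit hdp, by simp at hlen ⊢; omega⟩
termination_by (L - x.2).toNat
decreasing_by
  rw [not_or, not_le] at hc
  have h1 := hc.1
  omega

lemma phi_shift (L n : ℤ) (x : V × ℤ) :
    G.phi L (x.1, x.2 + n) = shiftMul n (G.phi (L - n) x) := by
  by_cases hc : L - n ≤ x.2 ∨ G.emit x.1 = ∅
  · have hc' : L ≤ (x.1, x.2 + n).2 ∨ G.emit (x.1, x.2 + n).1 = ∅ := by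
      rcases hc with hc | hc
      · left; simp only; omega
      · right; exact hc
    rw [G.phi_stop hc, G.phi_stop hc']
    show _ = Multiset.map _ {x}
    rw [Multiset.map_singleton]
  · push_neg at hc
    rw [G.phi_expand (x := (x.1, x.2 + n)) (by simp only; omega) (Finset.nonempty_iff_ne_empty.1 hc.2),
      G.phi_expand (by omega) (Finset.nonempty_iff_ne_empty.1 hc.2)]
    show _ = Multiset.map _ _
    rw [Multiset.map_bind]
    refine Multiset.bind_congr fun e _ => ?_
    have := phi_shift L n (G.r e, x.2 + 1)
    simp only at this ⊢
    rw [show x.2 + n + 1 = x.2 + 1 + n by omega, this]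
    rfl
termination_by (L - n - x.2).toNat
decreasing_by
  rw [not_or, not_le] at hc
  have h1 := hc.1
  omega

lemma phi_comp {L L' : ℤ} (h : L' ≤ L) (x : V × ℤ) :
    (G.phi L' x).bind (G.phi L) = G.phi L x := by
  by_cases hc : L' ≤ x.2 ∨ G.emit x.1 = ∅
  · rw [G.phi_stop hc, Multiset.singleton_bind]
  · push_neg at hc
    rw [G.phi_expand (by omega) (Finset.nonempty_iff_ne_empty.1 hc.2), G.phi_expand (L := L) (by omega) (Finset.nonempty_iff_ne_empty.1 hc.2),
      Multiset.bind_assoc]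
    exact Multiset.bind_congr fun e _ => phi_comp h _
termination_by (L' - x.2).toNat
decreasing_by
  rw [not_or, not_le] at hc
  have h1 := hc.1
  omega

/-- Full expansion of a multiset up to level `L`. -/
noncomputable def PhiM (L : ℤ) (m : Multiset (V × ℤ)) : Multiset (V × ℤ) :=
  m.bind (G.phi L)

lemma phiM_ne_zero {L : ℤ} {m : Multiset (V × ℤ)} (hm : m ≠ 0) : G.PhiM L m ≠ 0 := by
  obtain ⟨x, hx⟩ := Multiset.exists_mem_of_ne_zero hm
  obtain ⟨y, hy⟩ := Multiset.exists_mem_of_ne_zero (G.phi_ne_zero L x)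
  intro h0
  have : y ∈ G.PhiM L m := Multiset.mem_bind.2 ⟨x, hx, hy⟩
  rw [h0] at this
  simp at this

lemma phiM_shift (L n : ℤ) (m : Multiset (V × ℤ)) :
    G.PhiM L (shiftMul n m) = shiftMul n (G.PhiM (L - n) m) := by
  show (Multiset.map _ m).bind _ = Multiset.map _ (m.bind _)
  rw [Multiset.bind_map, Multiset.map_bind]
  exact Multiset.bind_congr fun x _ => G.phi_shift L n x

lemma phiM_comp {L L' : ℤ} (h : L' ≤ L) (m : Multiset (V × ℤ)) :
    G.PhiM L (G.PhiM L' m) = G.PhiM L m := by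
  show (m.bind _).bind _ = _
  rw [Multiset.bind_assoc]
  exact Multiset.bind_congr fun x _ => G.phi_comp h x

end RFGraph
namespace RFGraph

variable {V Ed : Type} [DecidableEq V] (G : RFGraph V Ed)

lemma tstep_desc {a b : Multiset (V × ℤ)} (h : G.TStep a b) :
    ∀ x ∈ a, ∃ y ∈ b, x.2 ≤ y.2 := by
  induction h using Relation.ReflTransGen.head_induction_on with
  | refl => exact fun x hx => ⟨x, hx, le_refl _⟩
  | head hstep _ ih =>
    intro x hx
    obtain ⟨v, i, hv, hne, rfl⟩ := hstep
    by_cases hxv : x = (v, i)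
    · obtain ⟨e, he⟩ := Finset.nonempty_iff_ne_empty.2 hne
      have hmem : (G.r e, i + 1) ∈ Multiset.map (fun e => (G.r e, i + 1)) (G.emit v).val :=
        Multiset.mem_map.2 ⟨e, he, rfl⟩
      obtain ⟨y, hy, hle⟩ := ih _ (Multiset.mem_add.2 (Or.inr hmem))
      refine ⟨y, hy, ?_⟩
      rw [hxv]
      show i ≤ y.2
      omega
    · exact ih x (Multiset.mem_add.2 (Or.inl ((Multiset.mem_erase_of_ne hxv).2 hx)))

lemma phi_expand' {L i : ℤ} {v : V} (h1 : i < L) (h2 : G.emit v ≠ ∅) :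
    G.phi L (v, i) = (G.emit v).val.bind (fun e => G.phi L (G.r e, i + 1)) :=
  G.phi_expand h1 h2

lemma phiM_inv {L : ℤ} {a b : Multiset (V × ℤ)} (h : G.TStep a b)
    (hb : ∀ y ∈ b, y.2 ≤ L) : G.PhiM L a = G.PhiM L b := by
  induction h using Relation.ReflTransGen.head_induction_on with
  | refl => rfl
  | head hstep hrest ih =>
    obtain ⟨v, i, hv, hne, rfl⟩ := hstep
    have hiL : i + 1 ≤ L := by
      obtain ⟨e, he⟩ := Finset.nonempty_iff_ne_empty.2 hne
      have hmem : (G.r e, i + 1) ∈ Multiset.map (fun e => (G.r e, i + 1)) (G.emit v).val :=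
        Multiset.mem_map.2 ⟨e, he, rfl⟩
      obtain ⟨y, hy, hle⟩ := G.tstep_desc hrest _ (Multiset.mem_add.2 (Or.inr hmem))
      exact le_trans hle (hb y hy)
    rw [← ih]
    conv_lhs => rw [← Multiset.cons_erase hv]
    rw [PhiM, PhiM, Multiset.cons_bind, Multiset.add_bind, Multiset.bind_map,
      G.phi_expand' (by omega) hne, add_comm]

lemma exists_ub (m : Multiset (V × ℤ)) : ∃ B : ℤ, ∀ y ∈ m, y.2 ≤ B := by
  induction m using Multiset.induction_on with
  | empty => exact ⟨0, by simp⟩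
  | cons a t ih =>
    obtain ⟨B, hB⟩ := ih
    refine ⟨max B a.2, fun y hy => ?_⟩
    rcases Multiset.mem_cons.1 hy with h | h
    · rw [h]; exact le_max_right _ _
    · exact le_trans (hB y h) (le_max_left _ _)

lemma exists_lb (m : Multiset (V × ℤ)) : ∃ B : ℤ, ∀ y ∈ m, B ≤ y.2 := by
  induction m using Multiset.induction_on with
  | empty => exact ⟨0, by simp⟩
  | cons a t ih =>
    obtain ⟨B, hB⟩ := ih
    refine ⟨min B a.2, fun y hy => ?_⟩
    rcases Multiset.mem_cons.1 hy with h | h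
    · rw [h]; exact min_le_right _ _
    · exact le_trans (min_le_left _ _) (hB y h)

lemma card_le_bind {α β : Type*} (m : Multiset α) (f : α → Multiset β)
    (hf : ∀ x ∈ m, f x ≠ 0) : Multiset.card m ≤ Multiset.card (m.bind f) := by
  induction m using Multiset.induction_on with
  | empty => simp
  | cons a t ih =>
    rw [Multiset.cons_bind, Multiset.card_add, Multiset.card_cons]
    have h1 : 1 ≤ Multiset.card (f a) :=
      Multiset.card_pos.2 (hf a (Multiset.mem_cons_self a t))
    have h2 := ih (fun x hx => hf x (Multiset.mem_cons_of_mem hx))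
    omega

lemma bind_card_eq {α β : Type*} {m : Multiset α} {f : α → Multiset β}
    (h : Multiset.card (m.bind f) = Multiset.card m) (hf : ∀ x ∈ m, f x ≠ 0) :
    ∀ x ∈ m, Multiset.card (f x) = 1 := by
  induction m using Multiset.induction_on with
  | empty => simp
  | cons a t ih =>
    rw [Multiset.cons_bind, Multiset.card_add, Multiset.card_cons] at h
    have h1 : 1 ≤ Multiset.card (f a) :=
      Multiset.card_pos.2 (hf a (Multiset.mem_cons_self a t))
    have h2 := card_le_bind t f (fun x hx => hf x (Multiset.mem_cons_of_mem hx))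
    intro x hx
    rcases Multiset.mem_cons.1 hx with hh | hh
    · rw [hh]; omega
    · exact ih (by omega) (fun z hz => hf z (Multiset.mem_cons_of_mem hz)) x hh

lemma dp_append {v u w : V} {a b : List Ed} (h1 : G.DetPath v a u) (h2 : G.DetPath u b w) :
    G.DetPath v (a ++ b) w := by
  induction h1 with
  | nil _ => exact h2
  | cons hemit _ ih => exact DetPath.cons hemit (ih h2)

lemma dp_src {v w : V} {e : Ed} {es : List Ed} (h : G.DetPath v (e :: es) w) :
    G.s e = v ∧ G.emit v = {e} := by
  cases h with
  | cons hemit _ =>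
    exact ⟨(G.mem_emit e v).1 (hemit ▸ Finset.mem_singleton_self e), hemit⟩

lemma dp_chain {v w : V} {es : List Ed} (h : G.DetPath v es w) :
    List.Chain' (fun e f => G.r e = G.s f) es := by
  induction h with
  | nil _ => exact List.isChain_nil
  | @cons v w e es hemit hrest ih =>
    rcases es with _ | ⟨e', t⟩
    · exact List.isChain_singleton _
    · exact List.IsChain.cons_cons (G.dp_src hrest).1.symm ih

lemma dp_last {v w : V} {es : List Ed} (h : G.DetPath v es w) (hne : es ≠ []) :
    G.r (es.getLast hne) = w := by
  induction h with
  | nil _ => exact absurd rfl hne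
  | @cons v w e es hemit hrest ih =>
    rcases es with _ | ⟨e', t⟩
    · cases hrest; simp
    · rw [List.getLast_cons (by simp)]
      exact ih (by simp)

lemma dp_emit {v w : V} {es : List Ed} (h : G.DetPath v es w) :
    ∀ e ∈ es, G.emit (G.s e) = {e} := by
  induction h with
  | nil _ => simp
  | @cons v w e es hemit hrest ih =>
    intro f hf
    rcases List.mem_cons.1 hf with h | h
    · subst h
      rw [(G.mem_emit f v).1 (hemit ▸ Finset.mem_singleton_self f)]
      exact hemit
    · exact ih f h

lemma dp_split {v w : V} {a b : List Ed} (h : G.DetPath v (a ++ b) w) :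
    ∃ u, G.DetPath v a u ∧ G.DetPath u b w := by
  induction a generalizing v with
  | nil => exact ⟨v, DetPath.nil v, h⟩
  | cons e t ih =>
    cases h with
    | cons hemit hrest =>
      obtain ⟨u, h1, h2⟩ := ih hrest
      exact ⟨u, DetPath.cons hemit h1, h2⟩

lemma extract : ∀ (N : ℕ) (es : List Ed) (v : V), es.length ≤ N → G.DetPath v es v →
    es ≠ [] → ∃ p, G.IsCycle p ∧ G.NoExit p := by
  intro N
  induction N with
  | zero =>
    intro es v hlen _ hne
    exact absurd (List.length_eq_zero_iff.1 (by omega)) hne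
  | succ N ih =>
    intro es v hlen hdp hne
    by_cases hnd : (es.map G.s).Nodup
    · refine ⟨es, ⟨hne, G.dp_chain hdp, ?_, hnd⟩, G.dp_emit hdp⟩
      have h1 : G.r (es.getLast hne) = v := G.dp_last hdp hne
      have h2 : G.s (es.head hne) = v := by
        rcases es with _ | ⟨e, t⟩
        · exact absurd rfl hne
        · exact (G.dp_src hdp).1
      rw [h1, h2]
    · have key : ∀ i j (hij : i < j) (hj : j < es.length), G.s (es[i]'(by omega)) = G.s (es[j]'(by omega)) →
          ∃ p, G.IsCycle p ∧ G.NoExit p := by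
        intro i j hij hj hs
        obtain ⟨u2, h1, h2⟩ := G.dp_split (a := es.take j) (b := es.drop j)
          (by rw [List.take_append_drop]; exact hdp)
        have hdj : es.drop j = es[j] :: es.drop (j + 1) := List.drop_eq_getElem_cons hj
        have hu2 : G.s (es[j]'hj) = u2 := by
          rw [hdj] at h2
          exact (G.dp_src h2).1
        obtain ⟨u1, h3, h4⟩ := G.dp_split (a := (es.take j).take i) (b := (es.take j).drop i)
          (by rw [List.take_append_drop]; exact h1)
        have hlent : (es.take j).length = j := by rw [List.length_take]; omega
        have hsd : (es.take j).drop i = es[i]'(by omega) :: ((es.take j).drop (i + 1)) := by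
          rw [List.drop_eq_getElem_cons (by omega)]
          congr 1
          exact List.getElem_take
        have hu1 : G.s (es[i]'(by omega)) = u1 := by
          rw [hsd] at h4
          exact (G.dp_src h4).1
        have huu : u2 = u1 := by rw [← hu1, ← hu2, hs]
        have hseglen : ((es.take j).drop i).length = j - i := by
          rw [List.length_drop]; omega
        refine ih ((es.take j).drop i) u1 (by omega) (by rw [huu] at h4; exact h4) ?_
        intro h0
        rw [h0] at hseglen
        simp at hseglen
        omega
      rw [List.nodup_iff_injective_get] at hnd
      simp only [Function.Injective, not_forall] at hnd
      obtain ⟨a, b, hab, hne'⟩ := hnd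
      have hsab : G.s (es[(a : ℕ)]'(by have := a.2; simpa using this)) =
          G.s (es[(b : ℕ)]'(by have := b.2; simpa using this)) := by
        simpa [List.get_eq_getElem] using hab
      rcases Nat.lt_or_ge (a : ℕ) (b : ℕ) with h | h
      · exact key a b h (by have := b.2; simpa using this) hsab
      · have hba : (b : ℕ) < (a : ℕ) := by
          rcases Nat.lt_or_ge (b : ℕ) (a : ℕ) with h' | h'
          · exact h'
          · exact absurd (Fin.ext (by omega)) hne'
        exact key b a hba (by have := a.2; simpa using this) hsab.symm

end RFGraph
namespace RFGraph

variable {V Ed : Type} [DecidableEq V] (G : RFGraph V Ed)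

lemma endgame {n : ℤ} (hn : 1 ≤ n) {δ : Multiset (V × ℤ)} (hδ0 : δ ≠ 0) {L : ℤ}
    (hlev : ∀ x ∈ δ, x.2 ≤ L - n) (heq : G.PhiM L δ = shiftMul n δ) :
    ∃ p, G.IsCycle p ∧ G.NoExit p := by
  classical
  have hmemshift : ∀ y : V × ℤ, y ∈ shiftMul n δ → (y.1, y.2 - n) ∈ δ := by
    intro y hy
    obtain ⟨z, hz, hzy⟩ := Multiset.mem_map.1 hy
    subst hzy
    simpa only [add_sub_cancel_right, Prod.mk.eta] using hz
  -- no sinks occur in δ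
  have hsf : ∀ x ∈ δ, G.emit x.1 ≠ ∅ := by
    by_contra hcon
    push_neg at hcon
    obtain ⟨x, hx, hsink⟩ := hcon
    have hiter : ∀ k : ℕ, (x.1, x.2 - k * n) ∈ δ := by
      intro k
      induction k with
      | zero => simpa using hx
      | succ k ihk =>
        have hphi : G.phi L (x.1, x.2 - k * n) = {(x.1, x.2 - k * n)} :=
          G.phi_stop (Or.inr hsink)
        have hmem : (x.1, x.2 - k * n) ∈ G.PhiM L δ :=
          Multiset.mem_bind.2 ⟨_, ihk, by rw [hphi]; exact Multiset.mem_singleton_self _⟩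
        rw [heq] at hmem
        have h2 := hmemshift _ hmem
        have harith : x.2 - (k : ℤ) * n - n = x.2 - ((k : ℕ) + 1 : ℕ) * n := by
          push_cast
          ring
        rwa [harith] at h2
    obtain ⟨B, hB⟩ := exists_lb δ
    have hBx : B ≤ x.2 := hB x hx
    set k : ℕ := (x.2 - B + 1).toNat with hkdef
    have hk := hiter k
    have hBle := hB _ hk
    have hkval : (k : ℤ) = x.2 - B + 1 := by rw [hkdef]; omega
    have hmul : (k : ℤ) * 1 ≤ (k : ℤ) * n :=
      mul_le_mul_of_nonneg_left hn (by positivity)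
    simp only at hBle
    linarith
  -- each generator expands to a single leaf
  have hcard : ∀ x ∈ δ, Multiset.card (G.phi L x) = 1 := by
    refine bind_card_eq ?_ (fun x _ => G.phi_ne_zero L x)
    show Multiset.card (G.PhiM L δ) = _
    rw [heq]
    exact Multiset.card_map _ _
  -- the successor structure
  have hnext : ∀ x ∈ δ, ∃ w : V, (w, L - n) ∈ δ ∧ ∃ es, G.DetPath x.1 es w ∧ es ≠ [] := by
    intro x hx
    obtain ⟨y, hy⟩ := Multiset.card_eq_one.1 (hcard x hx)
    have hyub : y.2 ≤ L := G.phi_ub (le_trans (hlev x hx) (by omega)) y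
      (by rw [hy]; exact Multiset.mem_singleton_self _)
    have hymem : y ∈ shiftMul n δ := by
      rw [← heq]
      exact Multiset.mem_bind.2 ⟨x, hx, by rw [hy]; exact Multiset.mem_singleton_self _⟩
    have hyL : y.2 = L := by
      by_contra hlt
      have h1 : y.2 < L := lt_of_le_of_ne hyub hlt
      have hsink : G.emit y.1 = ∅ := G.phi_sing_sink hy h1
      exact hsf _ (hmemshift y hymem) hsink
    obtain ⟨es, hdp, hlen⟩ := G.phi_det hy
    refine ⟨y.1, ?_, es, hdp, ?_⟩
    · have := hmemshift y hymem
      rwa [hyL] at this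
    · intro h0
      rw [h0] at hlen
      simp only [List.length_nil, Nat.cast_zero, add_zero] at hlen
      have := hlev x hx
      omega
  -- iterate the successor map on the finite support
  obtain ⟨x0, hx0⟩ := Multiset.exists_mem_of_ne_zero hδ0
  let S := {x : V × ℤ // x ∈ δ.toFinset}
  haveI : Fintype S := FinsetCoe.fintype _
  haveI : Finite S := Finite.of_fintype S
  let f : S → S := fun x =>
    ⟨((hnext x.1 (Multiset.mem_toFinset.1 x.2)).choose, L - n),
      Multiset.mem_toFinset.2 (hnext x.1 (Multiset.mem_toFinset.1 x.2)).choose_spec.1⟩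
  have hstep : ∀ x : S, ∃ es, G.DetPath x.1.1 es (f x).1.1 ∧ es ≠ [] := by
    intro x
    obtain ⟨es, hdp, hne⟩ := (hnext x.1 (Multiset.mem_toFinset.1 x.2)).choose_spec.2
    exact ⟨es, hdp, hne⟩
  have hiterdp : ∀ (k : ℕ) (x : S), ∃ es, G.DetPath x.1.1 es ((f^[k]) x).1.1 ∧
      (k ≠ 0 → es ≠ []) := by
    intro k
    induction k with
    | zero => exact fun x => ⟨[], DetPath.nil _, fun h => absurd rfl h⟩
    | succ k ihk =>
      intro x
      obtain ⟨es1, h1, hne1⟩ := hstep x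
      obtain ⟨es2, h2, _⟩ := ihk (f x)
      refine ⟨es1 ++ es2, ?_, fun _ h0 => hne1 (List.append_eq_nil_iff.1 h0).1⟩
      rw [Function.iterate_succ_apply]
      exact G.dp_append h1 h2
  let x0' : S := ⟨x0, Multiset.mem_toFinset.2 hx0⟩
  obtain ⟨i, j, hij, heqij⟩ :=
    Finite.exists_ne_map_eq_of_infinite (fun k : ℕ => (f^[k]) x0')
  have hkey : ∃ i j : ℕ, i < j ∧ (f^[i]) x0' = (f^[j]) x0' := by
    rcases Nat.lt_or_ge i j with h | h
    · exact ⟨i, j, h, heqij⟩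
    · refine ⟨j, i, ?_, heqij.symm⟩
      rcases Nat.lt_or_ge j i with h' | h'
      · exact h'
      · exact absurd (Nat.le_antisymm h' h) hij
  obtain ⟨i', j', hlt, heq'⟩ := hkey
  set y := (f^[i']) x0' with hydef
  have hcyc : (f^[j' - i']) y = y := by
    rw [hydef, ← Function.iterate_add_apply, Nat.sub_add_cancel hlt.le, ← heq']
  obtain ⟨es, hdp, hne⟩ := hiterdp (j' - i') y
  rw [hcyc] at hdp
  exact G.extract es.length es y.1.1 le_rfl hdp (hne (by omega))

lemma free_of_condL (hL : ∀ p, G.IsCycle p → G.HasExit p) (a : G.TM) (ha : a ≠ 0)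
    (n : ℤ) (hfix : G.tshift n a = a) : n = 0 := by
  by_contra hn
  have key : ∀ m : ℤ, 1 ≤ m → ∀ b : G.TM, b ≠ 0 → G.tshift m b = b → False := by
    intro m hm b hb hfixb
    obtain ⟨α, rfl⟩ := AddCon.mk'_surjective b
    have hα0 : α ≠ 0 := fun h => hb (by rw [h, map_zero]; rfl)
    have htc : G.tcon α (shiftMul m α) := by
      have h1 : G.tcon.mk' (shiftMul m α) = G.tcon.mk' α := by
        rw [← G.tshift_mk']; exact hfixb
      exact ((AddCon.eq _).1 h1).symm
    obtain ⟨γ, hg1, hg2⟩ := G.tcon_join htc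
    set β := shiftMul (-m) γ with hβdef
    have hsm : shiftMul m β = γ := by
      rw [hβdef, shiftMul_shiftMul, show -m + m = 0 by ring, shiftMul_zero']
    have hs1 : G.TStep α β := by
      have h2 := G.tstep_shift (-m) hg2
      rwa [shiftMul_shiftMul, show m + -m = 0 by ring, shiftMul_zero'] at h2
    have hs2 : G.TStep α (shiftMul m β) := by rw [hsm]; exact hg1
    have hβ0 : β ≠ 0 := G.tstep_ne_zero hs1 hα0
    obtain ⟨B, hB⟩ := exists_ub β
    set L := B + m with hLdef
    have h1 : G.PhiM L α = G.PhiM L β :=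
      G.phiM_inv hs1 (fun y hy => by have := hB y hy; omega)
    have h2 : G.PhiM L α = G.PhiM L (shiftMul m β) := by
      refine G.phiM_inv hs2 ?_
      intro y hy
      obtain ⟨z, hz, hzy⟩ := Multiset.mem_map.1 hy
      have hz2 : z.2 + m = y.2 := congrArg Prod.snd hzy
      have := hB z hz
      omega
    have h3 : G.PhiM L (shiftMul m β) = shiftMul m (G.PhiM (L - m) β) := G.phiM_shift L m β
    have h4 : G.PhiM L (G.PhiM (L - m) β) = G.PhiM L β := G.phiM_comp (by omega) β
    set δ := G.PhiM (L - m) β with hδdef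
    have heqkey : G.PhiM L δ = shiftMul m δ := by rw [hδdef, h4, ← h1, h2, h3]
    have hδ0 : δ ≠ 0 := G.phiM_ne_zero hβ0
    have hδlev : ∀ x ∈ δ, x.2 ≤ L - m := by
      intro x hx
      obtain ⟨z, hz, hxz⟩ := Multiset.mem_bind.1 hx
      exact G.phi_ub (by have := hB z hz; omega) x hxz
    obtain ⟨p, hcyc, hnoex⟩ := G.endgame hm hδ0 hδlev heqkey
    obtain ⟨e, ⟨ff, hfp, hsef⟩, hep⟩ := hL p hcyc
    have hememit : e ∈ G.emit (G.s ff) := (G.mem_emit _ _).2 hsef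
    rw [hnoex ff hfp] at hememit
    exact hep (by rw [Finset.mem_singleton.1 hememit]; exact hfp)
  rcases lt_or_gt_of_ne hn with h | h
  · have hfix2 : G.tshift (-n) a = a := by
      conv_lhs => rw [← hfix]
      rw [G.tshift_tshift, show n + -n = 0 by ring, G.tshift_zero']
    exact key (-n) (by omega) a ha hfix2
  · exact key n (by omega) a ha hfix

lemma walk {v w : V} {es : List Ed} (h : G.DetPath v es w) :
    ∀ i : ℤ, G.TStep {(v, i)} {(w, i + es.length)} := by
  induction h with
  | nil v =>
    intro i
    simpa [TStep] using (Relation.ReflTransGen.refl :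
      Relation.ReflTransGen G.TStep1 {(v, i)} {(v, i)})
  | @cons v w e es hemit hrest ih =>
    intro i
    have hstep : G.TStep1 {(v, i)} {(G.r e, i + 1)} := by
      refine ⟨v, i, Multiset.mem_singleton_self _, ?_, ?_⟩
      · rw [hemit]; exact Finset.singleton_ne_empty e
      · rw [Multiset.erase_singleton, hemit]
        simp
    have hrest' := ih (i + 1)
    have harith : i + ((e :: es).length : ℤ) = (i + 1) + (es.length : ℤ) := by
      simp only [List.length_cons]
      push_cast
      ring
    rw [harith]
    exact Relation.ReflTransGen.head hstep hrest'

lemma noexit_of_not_hasexit {p : List Ed} (hc : G.IsCycle p) (h : ¬ G.HasExit p) :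
    G.NoExit p := by
  intro e he
  obtain ⟨hne, hchain, hclose, hnd⟩ := hc
  ext f
  simp only [Finset.mem_singleton, G.mem_emit]
  constructor
  · intro hf
    by_contra hfe
    have hfp : f ∈ p := by
      by_contra hfp
      exact h ⟨f, ⟨e, he, hf⟩, hfp⟩
    exact hfe (List.inj_on_of_nodup_map hnd hfp he hf)
  · intro hf
    rw [hf]

lemma dp_of_noexit : ∀ (es : List Ed) (hne : es ≠ []),
    (∀ e ∈ es, G.emit (G.s e) = {e}) → List.Chain' (fun e f => G.r e = G.s f) es →
    G.DetPath (G.s (es.head hne)) es (G.r (es.getLast hne)) := by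
  intro es
  induction es with
  | nil => intro hne; exact absurd rfl hne
  | cons e t ih =>
    intro hne hemit hchain
    rcases t with _ | ⟨e', t'⟩
    · exact DetPath.cons (hemit e (List.mem_cons_self)) (DetPath.nil _)
    · have hchain' : List.Chain' (fun e f => G.r e = G.s f) (e' :: t') :=
        (List.isChain_cons_cons.1 hchain).2
      have hre : G.r e = G.s e' := (List.isChain_cons_cons.1 hchain).1
      have hrec := ih (by simp) (fun f hf => hemit f (List.mem_cons_of_mem e hf)) hchain'
      refine DetPath.cons (hemit e (List.mem_cons_self)) ?_
      rw [List.getLast_cons (by simp)]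
      have hh : (e' :: t').head (by simp) = e' := rfl
      rw [hh] at hrec
      rwa [← hre] at hrec

lemma condL_of_free (hfree : ∀ a : G.TM, a ≠ 0 → ∀ n : ℤ, G.tshift n a = a → n = 0) :
    ∀ p, G.IsCycle p → G.HasExit p := by
  intro p hc
  by_contra hex
  have hnx := G.noexit_of_not_hasexit hc hex
  obtain ⟨hne, hchain, hclose, hnd⟩ := hc
  have hdp0 := G.dp_of_noexit p hne (fun e he => hnx e he) hchain
  rw [hclose] at hdp0
  set v := G.s (p.head hne) with hvdef
  have hw : G.TStep {(v, (0 : ℤ))} {(v, (0 : ℤ) + p.length)} := G.walk hdp0 0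
  have htc : G.tcon {(v, (0 : ℤ))} {(v, ((p.length : ℤ)))} := by
    have := G.tstep_tcon hw
    rwa [zero_add] at this
  have hgen0 : G.tgen v 0 ≠ 0 := by
    intro h0
    have hz : ({((v : V), (0 : ℤ))} : Multiset (V × ℤ)) = 0 := G.mk'_eq_zero h0
    simp at hz
  have hfixed : G.tshift (p.length) (G.tgen v 0) = G.tgen v 0 := by
    show G.tshift _ (G.tcon.mk' {(v, 0)}) = G.tcon.mk' {(v, 0)}
    rw [G.tshift_mk']
    have hsm : shiftMul (p.length : ℤ) ({((v : V), (0 : ℤ))} : Multiset (V × ℤ)) =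
        {(v, (p.length : ℤ))} := by
      have hrfl : (shiftMul (p.length : ℤ) : Multiset (V × ℤ) →+ Multiset (V × ℤ))
          ({((v : V), (0 : ℤ))}) =
          Multiset.map (fun q : V × ℤ => (q.1, q.2 + (p.length : ℤ))) {((v : V), (0 : ℤ))} := rfl
      rw [hrfl, Multiset.map_singleton]
      simp
    rw [hsm]
    exact ((AddCon.eq _).2 htc.symm)
  have hlen0 := hfree _ hgen0 _ hfixed
  rw [Nat.cast_eq_zero] at hlen0
  exact hne (List.length_eq_zero_iff.1 hlen0)

end RFGraph

/-- The graph `E` satisfies Condition (L) (every cycle has an exit) if and only if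
`ℤ` acts freely on the nonzero elements of the talented monoid `M_E^{gr}`. -/
theorem conditionL_iff_free {V Ed : Type} [DecidableEq V] (G : RFGraph V Ed) :
    (∀ p : List Ed, G.IsCycle p → G.HasExit p) ↔
      ∀ a : G.TM, a ≠ 0 → ∀ n : ℤ, G.tshift n a = a → n = 0 := by
  constructor
  · exact fun hL => G.free_of_condL hL
  · exact fun hfree => G.condL_of_free hfree
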